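/- Let n ≥ 2, r > 0, and define e(v, u) := (n/2) λ_max(v ⊗ v − u) for v ∈ ℝⁿ, u ∈ Mₙ⁰. Then the sublevel set {(v, u) ∈ ℝⁿ × Mₙ⁰ : e(v, u) ≤ r²/2} equals the convex hull (in ℝⁿ × Mₙ⁰) of the set K̃(r) := {(ṽ, ṽ ⊗ ṽ − (r²/n) Iₙ) : ṽ ∈ ℝⁿ, |ṽ| = r}. -/

import Mathlib

open scoped BigOperators

noncomputable section

/-- The Euclidean norm of a vector in `ℝ^m`. -/
def eNorm {m : ℕ} (v : Fin m → ℝ) : ℝ := Real.sqrt (∑ i, v i ^ 2)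

/-- `Mₙ⁰`: the submodule of symmetric trace-free `n × n` real matrices. -/
def M0 (n : ℕ) : Submodule ℝ (Matrix (Fin n) (Fin n) ℝ) where
  carrier := {A | A.IsSymm ∧ A.trace = 0}
  add_mem' := fun ha hb => ⟨ha.1.add hb.1, by rw [Matrix.trace_add, ha.2, hb.2, add_zero]⟩
  zero_mem' := ⟨Matrix.isSymm_zero, Matrix.trace_zero ..⟩
  smul_mem' := fun c _ hA => ⟨hA.1.smul c, by rw [Matrix.trace_smul, hA.2, smul_zero]⟩

/-- For `v ∈ ℝⁿ` and `u ∈ Mₙ⁰`, the matrix `v ⊗ v − u` is symmetric (hence Hermitian). -/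
lemma herm_aux {n : ℕ} (v : Fin n → ℝ) (u : M0 n) :
    (Matrix.vecMulVec v v - (u : Matrix (Fin n) (Fin n) ℝ)).IsHermitian := by
  rw [Matrix.IsHermitian, Matrix.conjTranspose_eq_transpose_of_trivial]
  have h1 : (Matrix.vecMulVec v v).IsSymm := by
    apply Matrix.IsSymm.ext
    intro i j
    simp [Matrix.vecMulVec_apply, mul_comm]
  exact h1.sub u.2.1

/-- `e(v, u) = (n/2) λ_max(v ⊗ v − u)`, where `λ_max` is the largest eigenvalue
of the symmetric matrix `v ⊗ v − u`. -/
def efun (n : ℕ) : (Fin n → ℝ) × M0 n → ℝ :=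
  fun p => ((n : ℝ) / 2) * ⨆ i, (herm_aux p.1 p.2).eigenvalues i

/-! ### Auxiliary lemmas -/

section Aux
open Matrix
variable {n : ℕ} {C : Matrix (Fin n) (Fin n) ℝ}

lemma sum_mulVec' {ι : Type*} (s : Finset ι) (M : ι → Matrix (Fin n) (Fin n) ℝ) (x : Fin n → ℝ) :
    (∑ i ∈ s, M i) *ᵥ x = ∑ i ∈ s, (M i *ᵥ x) := by
  ext j
  simp [Matrix.mulVec, dotProduct, Matrix.sum_apply, Finset.sum_apply, Finset.sum_mul]
  rw [Finset.sum_comm]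

lemma dotProduct_sum' {ι : Type*} (s : Finset ι) (x : Fin n → ℝ) (f : ι → (Fin n → ℝ)) :
    x ⬝ᵥ (∑ i ∈ s, f i) = ∑ i ∈ s, x ⬝ᵥ f i := by
  simp only [dotProduct, Finset.sum_apply, Finset.mul_sum]
  rw [Finset.sum_comm]

lemma quad_vecMulVec (a x : Fin n → ℝ) :
    x ⬝ᵥ ((Matrix.vecMulVec a a) *ᵥ x) = (a ⬝ᵥ x) ^ 2 := by
  simp only [dotProduct, Matrix.mulVec, Matrix.vecMulVec_apply, dotProduct,
    Finset.mul_sum, Finset.sum_mul, sq]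
  rw [Finset.sum_comm]
  apply Finset.sum_congr rfl; intro i _
  apply Finset.sum_congr rfl; intro j _
  ring

lemma basis_orthonormal_sum (hC : C.IsHermitian) (i k : Fin n) :
    ∑ j, hC.eigenvectorBasis i j * hC.eigenvectorBasis k j = if i = k then 1 else 0 := by
  have h := hC.eigenvectorBasis.orthonormal
  have := orthonormal_iff_ite.mp h i k
  rw [← this]
  simp [PiLp.inner_apply, mul_comm]

lemma one_sum (hC : C.IsHermitian) :
    (1 : Matrix (Fin n) (Fin n) ℝ) =
      ∑ i, Matrix.vecMulVec (hC.eigenvectorBasis i) (hC.eigenvectorBasis i) := by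
  have hU : (hC.eigenvectorUnitary : Matrix (Fin n) (Fin n) ℝ) *
      star (hC.eigenvectorUnitary : Matrix (Fin n) (Fin n) ℝ) = 1 :=
    Matrix.mem_unitaryGroup_iff.mp hC.eigenvectorUnitary.2
  ext j k
  rw [← hU]
  simp [Matrix.mul_apply, Matrix.vecMulVec_apply, Matrix.star_apply,
    Matrix.IsHermitian.eigenvectorUnitary_apply, Matrix.sum_apply]

lemma spectral_sum (hC : C.IsHermitian) :
    C = ∑ i, hC.eigenvalues i • Matrix.vecMulVec (hC.eigenvectorBasis i) (hC.eigenvectorBasis i) := by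
  conv_lhs => rw [hC.spectral_theorem]
  ext j k
  simp [Matrix.mul_apply, Matrix.vecMulVec_apply, Matrix.star_apply, Matrix.diagonal,
    Matrix.IsHermitian.eigenvectorUnitary_apply, Matrix.sum_apply, Finset.sum_mul, mul_comm,
    mul_assoc, mul_left_comm]

lemma spectral_sum_apply (hC : C.IsHermitian) (j k : Fin n) :
    C j k = ∑ i, hC.eigenvalues i * (hC.eigenvectorBasis i j * hC.eigenvectorBasis i k) := by
  conv_lhs => rw [spectral_sum hC]
  simp [Matrix.sum_apply, Matrix.vecMulVec_apply]

lemma trace_vecMulVec' (a b : Fin n → ℝ) :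
    (Matrix.vecMulVec a b).trace = ∑ j, a j * b j := by
  simp [Matrix.trace, Matrix.diag, Matrix.vecMulVec_apply]

lemma eigen_sum_eq_trace (hC : C.IsHermitian) :
    ∑ i, hC.eigenvalues i = C.trace := by
  conv_rhs => rw [spectral_sum hC]
  rw [Matrix.trace_sum]
  apply Finset.sum_congr rfl
  intro i _
  rw [Matrix.trace_smul, trace_vecMulVec']
  have := basis_orthonormal_sum hC i i
  simp only [if_pos rfl] at this
  rw [this]
  simp

lemma key_decomp (hC : C.IsHermitian) (c : ℝ) :
    c • (1 : Matrix (Fin n) (Fin n) ℝ) - C =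
      ∑ i, (c - hC.eigenvalues i) • Matrix.vecMulVec (hC.eigenvectorBasis i) (hC.eigenvectorBasis i) := by
  conv_lhs => rw [spectral_sum hC, one_sum hC]
  rw [Finset.smul_sum, ← Finset.sum_sub_distrib]
  apply Finset.sum_congr rfl
  intro i _
  rw [sub_smul]

lemma smul_one_isHermitian (c : ℝ) :
    (c • (1 : Matrix (Fin n) (Fin n) ℝ)).IsHermitian := by
  unfold Matrix.IsHermitian
  ext j k
  simp only [Matrix.conjTranspose_apply, Matrix.smul_apply, Matrix.one_apply, star_trivial]
  rcases eq_or_ne j k with rfl | hjk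
  · rfl
  · rw [if_neg hjk, if_neg (Ne.symm hjk)]

lemma psd_iff_eigen_le (hC : C.IsHermitian) (c : ℝ) :
    (∀ i, hC.eigenvalues i ≤ c) ↔ (c • (1 : Matrix (Fin n) (Fin n) ℝ) - C).PosSemidef := by
  constructor
  · intro h
    refine Matrix.PosSemidef.of_dotProduct_mulVec_nonneg ((smul_one_isHermitian c).sub hC) (fun x => ?_)
    rw [key_decomp hC c, sum_mulVec', dotProduct_sum']
    apply Finset.sum_nonneg
    intro i _
    rw [Matrix.smul_mulVec, dotProduct_smul, star_trivial, quad_vecMulVec]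
    exact mul_nonneg (by linarith [h i]) (sq_nonneg _)
  · intro h i
    have h2 := h.dotProduct_mulVec_nonneg (hC.eigenvectorBasis i)
    have h4 : C *ᵥ (hC.eigenvectorBasis i : Fin n → ℝ) =
        hC.eigenvalues i • (hC.eigenvectorBasis i : Fin n → ℝ) := hC.mulVec_eigenvectorBasis i
    rw [Matrix.sub_mulVec, Matrix.smul_mulVec, Matrix.one_mulVec, h4, star_trivial,
      dotProduct_sub, dotProduct_smul, dotProduct_smul] at h2
    have hb : (hC.eigenvectorBasis i : Fin n → ℝ) ⬝ᵥ (hC.eigenvectorBasis i : Fin n → ℝ) = 1 := by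
      have := basis_orthonormal_sum hC i i
      simpa [dotProduct] using this
    rw [hb] at h2
    simp at h2
    linarith

lemma quad_eval {n : ℕ} (c : ℝ) (v : Fin n → ℝ) (u : Matrix (Fin n) (Fin n) ℝ) (x : Fin n → ℝ) :
    x ⬝ᵥ ((c • (1 : Matrix (Fin n) (Fin n) ℝ) - (Matrix.vecMulVec v v - u)) *ᵥ x) =
      c * (x ⬝ᵥ x) - (v ⬝ᵥ x) ^ 2 + x ⬝ᵥ (u *ᵥ x) := by
  rw [Matrix.sub_mulVec, Matrix.sub_mulVec, Matrix.smul_mulVec, Matrix.one_mulVec,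
    dotProduct_sub, dotProduct_sub, dotProduct_smul, quad_vecMulVec]
  ring_nf

end Aux

set_option maxHeartbeats 1000000

/-- The sublevel set `{e ≤ r²/2}` equals the convex hull of
`K̃(r) = {(ṽ, ṽ ⊗ ṽ − (r²/n) Iₙ) : |ṽ| = r}`. -/


theorem sublevel_eq_convexHull (n : ℕ) (hn : 2 ≤ n) (r : ℝ) (hr : 0 < r) :
    {p : (Fin n → ℝ) × M0 n | efun n p ≤ r ^ 2 / 2} =
      convexHull ℝ {p : (Fin n → ℝ) × M0 n |
        ∃ w : Fin n → ℝ, eNorm w = r ∧ p.1 = w ∧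
          (p.2 : Matrix (Fin n) (Fin n) ℝ) =
            Matrix.vecMulVec w w - ((r ^ 2) / n) • (1 : Matrix (Fin n) (Fin n) ℝ)} := by
  have hn0 : (0:ℝ) < n := by
    have : (2:ℝ) ≤ n := by exact_mod_cast hn
    linarith
  haveI : Nonempty (Fin n) := ⟨⟨0, by omega⟩⟩
  set c : ℝ := r ^ 2 / n with hc
  set K : Set ((Fin n → ℝ) × M0 n) := {p : (Fin n → ℝ) × M0 n |
        ∃ w : Fin n → ℝ, eNorm w = r ∧ p.1 = w ∧
          (p.2 : Matrix (Fin n) (Fin n) ℝ) =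
            Matrix.vecMulVec w w - c • (1 : Matrix (Fin n) (Fin n) ℝ)} with hK
  -- step 1: membership characterization
  have step1 : ∀ p : (Fin n → ℝ) × M0 n, efun n p ≤ r ^ 2 / 2 ↔
      (c • (1 : Matrix (Fin n) (Fin n) ℝ) -
        (Matrix.vecMulVec p.1 p.1 - (p.2 : Matrix (Fin n) (Fin n) ℝ))).PosSemidef := by
    intro p
    rw [← psd_iff_eigen_le (herm_aux p.1 p.2) c]
    unfold efun
    have hbdd : BddAbove (Set.range fun i => (herm_aux p.1 p.2).eigenvalues i) :=
      Set.Finite.bddAbove (Set.finite_range _)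
    constructor
    · intro h i
      have hsup : ((herm_aux p.1 p.2).eigenvalues i) ≤ ⨆ i, (herm_aux p.1 p.2).eigenvalues i :=
        le_ciSup hbdd i
      have hS : (⨆ i, (herm_aux p.1 p.2).eigenvalues i) ≤ r ^ 2 / n := by
        rw [le_div_iff₀ hn0]
        ring_nf at h ⊢
        linarith
      exact hsup.trans hS
    · intro h
      have hS : (⨆ i, (herm_aux p.1 p.2).eigenvalues i) ≤ r ^ 2 / n := ciSup_le h
      have h2 : (⨆ i, (herm_aux p.1 p.2).eigenvalues i) * n ≤ r ^ 2 := (le_div_iff₀ hn0).mp hS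
      ring_nf at h2 ⊢
      linarith
  apply Set.Subset.antisymm
  · -- sublevel ⊆ convexHull
    intro p hp
    obtain ⟨v, u⟩ := p
    rw [Set.mem_setOf_eq, step1] at hp
    set Cm : Matrix (Fin n) (Fin n) ℝ :=
      c • (1 : Matrix (Fin n) (Fin n) ℝ) -
        (Matrix.vecMulVec v v - (u : Matrix (Fin n) (Fin n) ℝ)) with hCm
    have hCh : Cm.IsHermitian := hp.1
    have hcn : c * (n : ℝ) = r ^ 2 := by rw [hc]; field_simp
    have htrace : Cm.trace = r ^ 2 - ∑ j, v j ^ 2 := by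
      rw [hCm, Matrix.trace_sub, Matrix.trace_sub, Matrix.trace_smul, Matrix.trace_one,
        trace_vecMulVec', u.2.2]
      have h2 : ∑ j, v j * v j = ∑ j, v j ^ 2 := by
        apply Finset.sum_congr rfl; intros; ring
      simp only [smul_eq_mul, Fintype.card_fin, sub_zero]
      rw [h2, hcn]
    have hts : ∑ i, hCh.eigenvalues i = r ^ 2 - ∑ j, v j ^ 2 := by
      rw [eigen_sum_eq_trace hCh, htrace]
    have hev0 : ∀ i, 0 ≤ hCh.eigenvalues i := fun i => hp.eigenvalues_nonneg i
    by_cases hcase : ∑ j, v j ^ 2 = r ^ 2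
    · -- boundary case : Cm = 0, the point is itself in K
      have hC0 : Cm = 0 := by
        have hsum0 : ∑ i, hCh.eigenvalues i = 0 := by rw [hts, hcase]; ring
        rw [spectral_sum hCh]
        apply Finset.sum_eq_zero
        intro i _
        have := (Finset.sum_eq_zero_iff_of_nonneg (fun i _ => hev0 i)).mp hsum0 i
          (Finset.mem_univ i)
        rw [this, zero_smul]
      apply subset_convexHull
      refine ⟨v, ?_, rfl, ?_⟩
      · show Real.sqrt (∑ i, v i ^ 2) = r
        rw [hcase, Real.sqrt_sq hr.le]
      · have h4 : c • (1 : Matrix (Fin n) (Fin n) ℝ) -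
            (Matrix.vecMulVec v v - (u : Matrix (Fin n) (Fin n) ℝ)) = 0 := hC0
        have h5 := sub_eq_zero.mp h4
        show (u : Matrix (Fin n) (Fin n) ℝ) = Matrix.vecMulVec v v - c • 1
        rw [h5]
        abel
    · -- interior case : genuine convex combination
      have hvle : ∑ j, v j ^ 2 ≤ r ^ 2 := by
        have h0 : 0 ≤ ∑ i, hCh.eigenvalues i := Finset.sum_nonneg fun i _ => hev0 i
        rw [hts] at h0; linarith
      set σ : ℝ := r ^ 2 - ∑ j, v j ^ 2 with hσdef
      have hσ : 0 < σ := lt_of_le_of_ne (by rw [hσdef]; linarith) (by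
        rw [hσdef]; intro h; exact hcase (by linarith))
      set bb : Fin n → Fin n → ℝ := fun i j => hCh.eigenvectorBasis i j with hbb
      set av : Fin n → ℝ := fun i => ∑ j, v j * bb i j with hav
      set sqr : Fin n → ℝ := fun i => Real.sqrt (av i ^ 2 + σ) with hsqr
      have hsqpos : ∀ i, 0 < sqr i := fun i => Real.sqrt_pos.mpr (by positivity)
      have hsq2 : ∀ i, sqr i ^ 2 = av i ^ 2 + σ := fun i => Real.sq_sqrt (by positivity)
      have habs : ∀ i, |av i| ≤ sqr i := by
        intro i
        calc |av i| = Real.sqrt (av i ^ 2) := (Real.sqrt_sq_eq_abs _).symm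
          _ ≤ Real.sqrt (av i ^ 2 + σ) := Real.sqrt_le_sqrt (by linarith)
      set tt : Fin n → Bool → ℝ := fun i s => if s then -av i + sqr i else -av i - sqr i with htt
      set qq : Fin n → Bool → ℝ := fun i s =>
        if s then (av i + sqr i) / (2 * sqr i) else (sqr i - av i) / (2 * sqr i) with hqq
      have hq0 : ∀ i s, 0 ≤ qq i s := by
        intro i s
        have h1 := habs i; have h2 := hsqpos i
        rw [abs_le] at h1
        cases s <;> simp only [hqq, if_true, if_false, Bool.false_eq_true] <;>
          exact div_nonneg (by linarith) (by linarith)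
      have hq1 : ∀ i, qq i true + qq i false = 1 := by
        intro i
        have h2 := (hsqpos i).ne'
        simp only [hqq, if_true, if_false, Bool.false_eq_true]
        field_simp
        ring
      have hqt : ∀ i, qq i true * tt i true + qq i false * tt i false = 0 := by
        intro i
        have h2 := (hsqpos i).ne'
        simp only [hqq, htt, if_true, if_false, Bool.false_eq_true]
        field_simp
        ring
      have hqt2 : ∀ i, qq i true * tt i true ^ 2 + qq i false * tt i false ^ 2 = σ := by
        intro i
        have h2 := (hsqpos i).ne'
        have h3 := hsq2 i
        simp only [hqq, htt, if_true, if_false, Bool.false_eq_true]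
        field_simp
        linear_combination (2 * sqr i) * h3
      have htts : ∀ i s, tt i s ^ 2 + 2 * av i * tt i s = σ := by
        intro i s
        have h3 := hsq2 i
        cases s <;> simp only [htt, if_true, if_false, Bool.false_eq_true] <;> nlinarith [h3]
      set ww : Fin n → Bool → (Fin n → ℝ) := fun i s j => v j + tt i s * bb i j with hww
      have hb1 : ∀ i, ∑ j, bb i j * bb i j = 1 := by
        intro i
        have := basis_orthonormal_sum hCh i i
        simpa [hbb] using this
      have hwnorm : ∀ i s, ∑ j, ww i s j ^ 2 = r ^ 2 := by
        intro i s
        have hstep : ∑ j, ww i s j ^ 2 =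
            (∑ j, v j ^ 2) + 2 * tt i s * (∑ j, v j * bb i j) +
              tt i s ^ 2 * (∑ j, bb i j * bb i j) := by
          rw [Finset.mul_sum, Finset.mul_sum, ← Finset.sum_add_distrib, ← Finset.sum_add_distrib]
          apply Finset.sum_congr rfl
          intro j _
          simp only [hww]
          ring
        have hai : ∑ j, v j * bb i j = av i := rfl
        rw [hstep, hb1 i, hai]
        have := htts i s
        simp only [hσdef] at this ⊢
        nlinarith [this]
      have hwmem : ∀ i s, (Matrix.vecMulVec (ww i s) (ww i s) -
          c • (1 : Matrix (Fin n) (Fin n) ℝ)) ∈ M0 n := by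
        intro i s
        constructor
        · have h1 : (Matrix.vecMulVec (ww i s) (ww i s)).IsSymm := by
            apply Matrix.IsSymm.ext; intro a b; simp [Matrix.vecMulVec_apply]; ring
          have h2 : (c • (1 : Matrix (Fin n) (Fin n) ℝ)).IsSymm := by
            apply Matrix.IsSymm.ext
            intro a b
            simp only [Matrix.transpose_apply, Matrix.smul_apply, Matrix.one_apply, smul_eq_mul]
            rcases eq_or_ne a b with rfl | hab
            · rfl
            · rw [if_neg hab, if_neg (Ne.symm hab)]
          exact h1.sub h2
        · rw [Matrix.trace_sub, trace_vecMulVec', Matrix.trace_smul, Matrix.trace_one]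
          have h2 : ∑ j, ww i s j * ww i s j = r ^ 2 := by
            rw [← hwnorm i s]
            apply Finset.sum_congr rfl; intros; ring
          simp only [smul_eq_mul, Fintype.card_fin]
          rw [h2, hcn]
          ring
      set z : Fin n × Bool → (Fin n → ℝ) × M0 n :=
        fun is => (ww is.1 is.2, ⟨_, hwmem is.1 is.2⟩) with hz
      set W : Fin n × Bool → ℝ := fun is => (hCh.eigenvalues is.1 / σ) * qq is.1 is.2 with hWdef
      have hW0 : ∀ is : Fin n × Bool, 0 ≤ W is :=
        fun is => mul_nonneg (div_nonneg (hev0 is.1) hσ.le) (hq0 _ _)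
      have hWsum : ∑ is : Fin n × Bool, W is = 1 := by
        rw [Fintype.sum_prod_type]
        have hstep : ∀ i, ∑ s : Bool, W (i, s) = hCh.eigenvalues i / σ := by
          intro i
          rw [Fintype.sum_bool]
          simp only [hWdef]
          rw [← mul_add, hq1 i, mul_one]
        rw [Finset.sum_congr rfl (fun i _ => hstep i), ← Finset.sum_div, hts,
          div_self hσ.ne']
      have hzK : ∀ is : Fin n × Bool, z is ∈ K := by
        intro is
        refine ⟨ww is.1 is.2, ?_, rfl, rfl⟩
        show Real.sqrt (∑ j, ww is.1 is.2 j ^ 2) = r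
        rw [hwnorm is.1 is.2, Real.sqrt_sq hr.le]
      have hfinal : Finset.univ.centerMass W z = (v, u) := by
        rw [Finset.centerMass_eq_of_sum_1 _ z hWsum]
        apply Prod.ext
        · -- first components
          rw [Prod.fst_sum]
          funext j
          rw [Finset.sum_apply]
          have hterm : ∀ is : Fin n × Bool, (W is • z is).1 j = W is * ww is.1 is.2 j :=
            fun is => rfl
          rw [Finset.sum_congr rfl (fun is _ => hterm is), Fintype.sum_prod_type]
          have hstep : ∀ i, ∑ s : Bool, W (i, s) * ww i s j =
              (hCh.eigenvalues i / σ) * v j := by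
            intro i
            rw [Fintype.sum_bool]
            simp only [hWdef, hww]
            linear_combination (hCh.eigenvalues i / σ * v j) * hq1 i +
              (hCh.eigenvalues i / σ * bb i j) * hqt i
          rw [Finset.sum_congr rfl (fun i _ => hstep i), ← Finset.sum_mul, ← Finset.sum_div,
            hts, div_self hσ.ne', one_mul]
        · -- second components
          apply Subtype.ext
          show ((∑ is : Fin n × Bool, W is • z is).2 : Matrix (Fin n) (Fin n) ℝ) = u
          rw [Prod.snd_sum, AddSubmonoidClass.coe_finset_sum]
          ext j k
          rw [Matrix.sum_apply]
          have hterm : ∀ is : Fin n × Bool,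
              ((W is • z is).2 : Matrix (Fin n) (Fin n) ℝ) j k =
                W is * (ww is.1 is.2 j * ww is.1 is.2 k - c * (1 : Matrix (Fin n) (Fin n) ℝ) j k) := by
            intro is
            show (W is • (Matrix.vecMulVec (ww is.1 is.2) (ww is.1 is.2) -
              c • (1 : Matrix (Fin n) (Fin n) ℝ))) j k = _
            simp only [Matrix.smul_apply, Matrix.sub_apply, Matrix.vecMulVec_apply, smul_eq_mul]
          rw [Finset.sum_congr rfl (fun is _ => hterm is), Fintype.sum_prod_type]
          have hstep : ∀ i, ∑ s : Bool,
              W (i, s) * (ww i s j * ww i s k - c * (1 : Matrix (Fin n) (Fin n) ℝ) j k) =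
                (hCh.eigenvalues i / σ) * (v j * v k - c * (1 : Matrix (Fin n) (Fin n) ℝ) j k) +
                  hCh.eigenvalues i * (bb i j * bb i k) := by
            intro i
            rw [Fintype.sum_bool]
            simp only [hWdef, hww]
            have e1 := hq1 i
            have e2 := hqt i
            have e3' : hCh.eigenvalues i / σ *
                (qq i true * tt i true ^ 2 + qq i false * tt i false ^ 2) =
                  hCh.eigenvalues i := by
              rw [hqt2 i, div_mul_eq_mul_div, mul_div_assoc, div_self hσ.ne', mul_one]
            linear_combination
              (hCh.eigenvalues i / σ * (v j * v k - c * (1 : Matrix (Fin n) (Fin n) ℝ) j k)) * e1 +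
              (hCh.eigenvalues i / σ * (v j * bb i k + bb i j * v k)) * e2 +
              (bb i j * bb i k) * e3'
          rw [Finset.sum_congr rfl (fun i _ => hstep i), Finset.sum_add_distrib,
            ← Finset.sum_mul, ← Finset.sum_div, hts, div_self hσ.ne', one_mul]
          have hspec : ∑ i, hCh.eigenvalues i * (bb i j * bb i k) = Cm j k := by
            rw [spectral_sum_apply hCh j k]
          rw [hspec]
          have hCjk : Cm j k = c * (1 : Matrix (Fin n) (Fin n) ℝ) j k -
              (v j * v k - (u : Matrix (Fin n) (Fin n) ℝ) j k) := by
            rw [hCm]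
            simp [Matrix.sub_apply, Matrix.smul_apply, Matrix.vecMulVec_apply, smul_eq_mul]
          rw [hCjk]
          ring
      rw [← hfinal]
      exact Finset.centerMass_mem_convexHull _ (fun is _ => hW0 is)
        (by rw [hWsum]; norm_num) (fun is _ => hzK is)
  · -- convexHull K ⊆ sublevel
    apply convexHull_min
    · rintro p ⟨w, hw, h1, h2⟩
      rw [Set.mem_setOf_eq, step1]
      have hz : c • (1 : Matrix (Fin n) (Fin n) ℝ) -
          (Matrix.vecMulVec p.1 p.1 - (p.2 : Matrix (Fin n) (Fin n) ℝ)) = 0 := by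
        rw [h1, h2]
        abel
      rw [hz]
      exact Matrix.PosSemidef.zero
    · intro p hp q hq a b ha hb hab
      rw [Set.mem_setOf_eq, step1] at hp hq ⊢
      refine Matrix.PosSemidef.of_dotProduct_mulVec_nonneg ((smul_one_isHermitian c).sub (herm_aux _ _)) (fun x => ?_)
      have hp2 := hp.dotProduct_mulVec_nonneg x
      have hq2 := hq.dotProduct_mulVec_nonneg x
      rw [star_trivial, quad_eval] at hp2 hq2 ⊢
      have hfst : (a • p + b • q).1 = a • p.1 + b • q.1 := rfl
      have hsnd : ((a • p + b • q).2 : Matrix (Fin n) (Fin n) ℝ) =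
          a • (p.2 : Matrix (Fin n) (Fin n) ℝ) + b • (q.2 : Matrix (Fin n) (Fin n) ℝ) := rfl
      rw [hfst, hsnd, add_dotProduct, smul_dotProduct, smul_dotProduct,
        Matrix.add_mulVec, Matrix.smul_mulVec, Matrix.smul_mulVec,
        dotProduct_add, dotProduct_smul, dotProduct_smul]
      simp only [smul_eq_mul]
      obtain rfl : b = 1 - a := by linarith
      nlinarith [mul_nonneg ha hp2, mul_nonneg hb hq2,
        mul_nonneg (mul_nonneg ha hb) (sq_nonneg (dotProduct p.1 x - dotProduct q.1 x))]

end
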